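/- Let k ≥ 2 be an integer and 0 < ε < 1. Define distributions P = (1/(3(k−1)),...,1/(3(k−1)), 2/3) and Q = ((1+ε)/(3(k−1)),...,(1+ε)/(3(k−1)), (2−ε)/3) on [k] (the first k−1 coordinates being equal). Then: (i) D(P‖Q) = (2/3)·log(2/(2−ε)) + (1/3)·log(1/(1+ε)) ≤ ε²; and (ii) H(Q) − H(P) ≥ (1/3)·log(2(k−1))·ε − ε². -/

import Mathlib

open scoped BigOperators
open Real

noncomputable section

/-- Shannon entropy `H(P) = ∑ pᵢ log (1/pᵢ)` (natural log, `0·log(1/0) = 0`). -/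
def entropy {k : ℕ} (P : Fin k → ℝ) : ℝ := ∑ i, P i * Real.log (1 / P i)

/-- Kullback–Leibler divergence `D(P‖Q) = ∑ pᵢ log(pᵢ/qᵢ)`. -/
def KL {k : ℕ} (P Q : Fin k → ℝ) : ℝ := ∑ i, P i * Real.log (P i / Q i)

/-- the two-point construction used in Le Cam's method. -/
theorem two_point_construction (k : ℕ) (hk : 2 ≤ k) (ε : ℝ) (hε0 : 0 < ε) (hε1 : ε < 1)
    (P Q : Fin k → ℝ)
    (hP : ∀ i : Fin k, P i = if (i : ℕ) < k - 1 then 1 / (3 * ((k : ℝ) - 1)) else 2 / 3)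
    (hQ : ∀ i : Fin k, Q i =
      if (i : ℕ) < k - 1 then (1 + ε) / (3 * ((k : ℝ) - 1)) else (2 - ε) / 3) :
    (KL P Q = (2 / 3) * Real.log (2 / (2 - ε)) + (1 / 3) * Real.log (1 / (1 + ε)) ∧
      KL P Q ≤ ε ^ 2) ∧
    (1 / 3) * Real.log (2 * ((k : ℝ) - 1)) * ε - ε ^ 2 ≤ entropy Q - entropy P := by
  obtain ⟨m, rfl⟩ : ∃ m, k = m + 1 := ⟨k - 1, by omega⟩
  have hm : 1 ≤ m := by omega
  have hr : (1:ℝ) ≤ (m:ℝ) := by exact_mod_cast hm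
  have hr0 : (0:ℝ) < (m:ℝ) := by linarith
  set r : ℝ := (m:ℝ) with hrdef
  have hcast : ((m+1 : ℕ) : ℝ) - 1 = r := by push_cast; ring
  have hε2 : (0:ℝ) < 2 - ε := by linarith
  have hε1p : (0:ℝ) < 1 + ε := by linarith
  have sum_if : ∀ (f : Fin (m+1) → ℝ) (a b : ℝ),
      (∀ i : Fin (m+1), f i = if (i:ℕ) < m then a else b) →
      ∑ i, f i = r * a + b := by
    intro f a b hf
    rw [Fin.sum_univ_castSucc]
    have h1 : ∀ i : Fin m, f i.castSucc = a := by
      intro i; rw [hf]; simp [i.is_lt]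
    rw [Finset.sum_congr rfl (fun i _ => h1 i), Finset.sum_const, hf]
    simp [hrdef, mul_comm]
  have hKL : KL P Q = (2/3) * Real.log (2/(2-ε)) + (1/3) * Real.log (1/(1+ε)) := by
    unfold KL
    rw [sum_if _ ((1/(3*r)) * Real.log (1/(1+ε))) ((2/3) * Real.log (2/(2-ε))) ?_]
    · field_simp
      ring
    · intro i
      rw [hP i, hQ i, hcast]
      simp only [Nat.add_sub_cancel]
      split_ifs
      · congr 1
        · rw [show (1/(3*r)) / ((1+ε)/(3*r)) = 1/(1+ε) by
            field_simp]
      · congr 1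
        rw [show ((2:ℝ)/3) / ((2-ε)/3) = 2/(2-ε) by field_simp]
  have hHP : entropy P = (1/3) * Real.log (3*r) + (2/3) * Real.log (3/2) := by
    unfold entropy
    rw [sum_if _ ((1/(3*r)) * Real.log (3*r)) ((2/3) * Real.log (3/2)) ?_]
    · field_simp
    · intro i
      rw [hP i, hcast]
      simp only [Nat.add_sub_cancel]
      split_ifs
      · congr 1
        rw [one_div_one_div]
      · congr 1
        rw [show (1:ℝ)/(2/3) = 3/2 by norm_num]
  have hHQ : entropy Q = ((1+ε)/3) * Real.log (3*r/(1+ε)) + ((2-ε)/3) * Real.log (3/(2-ε)) := by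
    unfold entropy
    rw [sum_if _ (((1+ε)/(3*r)) * Real.log (3*r/(1+ε))) (((2-ε)/3) * Real.log (3/(2-ε))) ?_]
    · field_simp
    · intro i
      rw [hQ i, hcast]
      simp only [Nat.add_sub_cancel]
      split_ifs
      · congr 1
        rw [one_div, inv_div]
      · congr 1
        rw [one_div, inv_div]
  -- scalar log bounds
  have L1 : Real.log (2/(2-ε)) ≤ ε/(2-ε) := by
    have := Real.log_le_sub_one_of_pos (show (0:ℝ) < 2/(2-ε) by positivity)
    have h : 2/(2-ε) - 1 = ε/(2-ε) := by field_simp; ring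
    linarith [h ▸ this]
  have L2 : Real.log (1/(1+ε)) ≤ -(ε/(1+ε)) := by
    have := Real.log_le_sub_one_of_pos (show (0:ℝ) < 1/(1+ε) by positivity)
    have h : 1/(1+ε) - 1 = -(ε/(1+ε)) := by field_simp; ring
    linarith [h ▸ this]
  have L3 : Real.log (1+ε) ≤ ε := by
    have := Real.log_le_sub_one_of_pos hε1p
    linarith
  have L4 : Real.log (2-ε) ≤ Real.log 2 - ε/2 := by
    have h1 : Real.log (2-ε) - Real.log 2 = Real.log ((2-ε)/2) := by
      rw [Real.log_div (by linarith) (by norm_num)]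
    have := Real.log_le_sub_one_of_pos (show (0:ℝ) < (2-ε)/2 by positivity)
    have h2 : (2-ε)/2 - 1 = -(ε/2) := by ring
    rw [h2] at this
    linarith [h1 ▸ this]
  refine ⟨⟨hKL, ?_⟩, ?_⟩
  · rw [hKL]
    have key : (2/3) * (ε/(2-ε)) + (1/3) * (-(ε/(1+ε))) ≤ ε^2 := by
      have h : 2/3 * (ε/(2-ε)) + 1/3 * (-(ε/(1+ε))) = ε^2/((2-ε)*(1+ε)) := by
        field_simp
        ring
      rw [h, div_le_iff₀ (by positivity)]
      nlinarith [mul_pos hε0 (show (0:ℝ) < 1 - ε by linarith), sq_nonneg ε]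
    linarith [L1, L2, key]
  · rw [hHP, hHQ, hcast]
    have e1 : Real.log (3*r/(1+ε)) = Real.log 3 + Real.log r - Real.log (1+ε) := by
      rw [Real.log_div (by positivity) (by positivity), Real.log_mul (by norm_num) (by positivity)]
    have e2 : Real.log (3/(2-ε)) = Real.log 3 - Real.log (2-ε) := by
      rw [Real.log_div (by norm_num) (by linarith)]
    have e3 : Real.log (3*r) = Real.log 3 + Real.log r := Real.log_mul (by norm_num) (by positivity)
    have e4 : Real.log (3/2) = Real.log 3 - Real.log 2 := Real.log_div (by norm_num) (by norm_num)
    have e5 : Real.log (2*r) = Real.log 2 + Real.log r := Real.log_mul (by norm_num) (by positivity)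
    rw [e1, e2, e3, e4, e5]
    linarith [sq_nonneg ε, mul_le_mul_of_nonneg_left L3 (show (0:ℝ) ≤ (1+ε)/3 by positivity),
      mul_le_mul_of_nonneg_left L4 (show (0:ℝ) ≤ (2-ε)/3 by positivity)]
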